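/- For every integer s ≥ 2, every positive integer k, and every integer m ≥ s·k, Duplicator wins the game EHR[T_1^{(s,k,m)}, T_2^{(s,k,m)}, s-1, k]. -/

import Mathlib

/-! ## Rooted trees -/

/-- A rooted tree structure: a vertex type, a root, and a parent map
(`parent v = none` is intended to hold exactly when `v` is the root). -/
structure RTree where
  V : Type
  root : V
  parent : V → Option V

namespace RTree

/-- Iterate the parent map `n` times. -/
def parentIter (T : RTree) : ℕ → T.V → Option T.V
  | 0, v => some v
  | n + 1, v => (T.parent v).bind (T.parentIter n)

/-- `u` is a descendant of `v` (possibly `u = v`). -/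
def IsDesc (T : RTree) (v u : T.V) : Prop :=
  ∃ n, T.parentIter n u = some v

/-- The structure is a genuine rooted, locally finite tree:
exactly the root has no parent, every vertex reaches the root by iterating
the parent map (connectivity and acyclicity), and every vertex has finitely
many children (local finiteness). -/
def IsTree (T : RTree) : Prop :=
  (∀ v, T.parent v = none ↔ v = T.root) ∧
  (∀ v, ∃ n, T.parentIter n v = some T.root) ∧
  (∀ v, {u | T.parent u = some v}.Finite)

open Classical in
/-- The subtree `T(v)` consisting of `v` and all its descendants, rooted at `v`. -/
noncomputable def subtree (T : RTree) (v : T.V) : RTree where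
  V := {u : T.V // T.IsDesc v u}
  root := ⟨v, 0, rfl⟩
  parent u :=
    if u.1 = v then none
    else (T.parent u.1).bind fun w =>
      if h : T.IsDesc v w then some ⟨w, h⟩ else none

end RTree

/-- An isomorphism of rooted trees: a bijection of vertices mapping root to
root and commuting with the parent maps. -/
structure TreeIso (S T : RTree) where
  toEquiv : S.V ≃ T.V
  map_root : toEquiv S.root = T.root
  map_parent : ∀ v, (S.parent v).map toEquiv = T.parent (toEquiv v)

/-! ## First-order logic of rooted trees -/

/-- Terms: variables (de Bruijn indices) and the constant `R` for the root. -/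
inductive FOTerm where
  | var : ℕ → FOTerm
  | root : FOTerm
deriving DecidableEq

/-- First-order formulas in the language of rooted trees: equality `x = y`,
the parent relation `parentOf t t'` (meaning `π(t') = t`, i.e. `t` is the
parent of `t'`), Boolean connectives, and quantifiers (de Bruijn style). -/
inductive FOFormula where
  | eq : FOTerm → FOTerm → FOFormula
  | parentOf : FOTerm → FOTerm → FOFormula
  | not : FOFormula → FOFormula
  | and : FOFormula → FOFormula → FOFormula
  | or : FOFormula → FOFormula → FOFormula
  | imp : FOFormula → FOFormula → FOFormula
  | all : FOFormula → FOFormula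
  | ex : FOFormula → FOFormula
deriving DecidableEq

namespace FOTerm

def eval (T : RTree) (env : ℕ → T.V) : FOTerm → T.V
  | var n => env n
  | root => T.root

def freeBound : FOTerm → ℕ
  | var n => n + 1
  | root => 0

end FOTerm

/-- Kinds of quantifiers, used to count alternations. -/
inductive QKind where
  | ex | all
deriving DecidableEq

/-- The dual of a quantifier kind. -/
def QKind.dual : QKind → QKind
  | .ex => .all
  | .all => .ex

namespace FOFormula

/-- Satisfaction of a formula in a rooted tree under an environment. -/
def Sat (T : RTree) : FOFormula → (ℕ → T.V) → Prop
  | eq t₁ t₂, env => t₁.eval T env = t₂.eval T env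
  | parentOf t₁ t₂, env => T.parent (t₂.eval T env) = some (t₁.eval T env)
  | not φ, env => ¬ φ.Sat T env
  | and φ ψ, env => φ.Sat T env ∧ ψ.Sat T env
  | or φ ψ, env => φ.Sat T env ∨ ψ.Sat T env
  | imp φ ψ, env => φ.Sat T env → ψ.Sat T env
  | all φ, env => ∀ w : T.V, φ.Sat T (fun n => match n with | 0 => w | Nat.succ k => env k)
  | ex φ, env => ∃ w : T.V, φ.Sat T (fun n => match n with | 0 => w | Nat.succ k => env k)

/-- Quantifier depth: the maximum number of nested quantifiers. -/
def qd : FOFormula → ℕ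
  | eq _ _ => 0
  | parentOf _ _ => 0
  | not φ => φ.qd
  | and φ ψ => max φ.qd ψ.qd
  | or φ ψ => max φ.qd ψ.qd
  | imp φ ψ => max φ.qd ψ.qd
  | all φ => φ.qd + 1
  | ex φ => φ.qd + 1

/-- Auxiliary alternation count: `aqdAux φ pol q` is the maximum number of
alternations between (effectively) existential and universal quantifiers along
a nested quantifier sequence of `φ`, given the current polarity `pol`
(`true` = positive; negations and antecedents of implications flip it, so that
e.g. a `∀` under a negation counts as an `∃`) and the effective kind `q` of
the innermost enclosing quantifier (if any). -/
def aqdAux : FOFormula → Bool → Option QKind → ℕ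
  | eq _ _, _, _ => 0
  | parentOf _ _, _, _ => 0
  | not φ, pol, q => φ.aqdAux (!pol) q
  | and φ ψ, pol, q => max (φ.aqdAux pol q) (ψ.aqdAux pol q)
  | or φ ψ, pol, q => max (φ.aqdAux pol q) (ψ.aqdAux pol q)
  | imp φ ψ, pol, q => max (φ.aqdAux (!pol) q) (ψ.aqdAux pol q)
  | all φ, pol, q =>
      (if q = some (if pol then QKind.ex else QKind.all) then 1 else 0) +
        φ.aqdAux pol (some (if pol then QKind.all else QKind.ex))
  | ex φ, pol, q =>
      (if q = some (if pol then QKind.all else QKind.ex) then 1 else 0) +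
        φ.aqdAux pol (some (if pol then QKind.ex else QKind.all))

/-- The number of alternations of quantifiers of a formula: the maximum number
of switches between (effectively) existential and universal quantifiers in a
nested quantifier sequence.  Purely existential or purely universal formulas
have `aqd = 0`. -/
def aqd (φ : FOFormula) : ℕ := φ.aqdAux true none

/-- A bound on the free variables of a formula: all free de Bruijn indices
are `< freeBound`. -/
def freeBound : FOFormula → ℕ
  | eq t₁ t₂ => max t₁.freeBound t₂.freeBound
  | parentOf t₁ t₂ => max t₁.freeBound t₂.freeBound
  | not φ => φ.freeBound
  | and φ ψ => max φ.freeBound ψ.freeBound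
  | or φ ψ => max φ.freeBound ψ.freeBound
  | imp φ ψ => max φ.freeBound ψ.freeBound
  | all φ => φ.freeBound - 1
  | ex φ => φ.freeBound - 1

/-- A sentence is a formula with no free variables. -/
def IsSentence (φ : FOFormula) : Prop := φ.freeBound = 0

end FOFormula

/-- A (closed) formula holds in a rooted tree. -/
def Models (T : RTree) (φ : FOFormula) : Prop :=
  φ.Sat T (fun _ => T.root)

/-- The formula `P_i(x)`, with free variable `x` being de Bruijn index `0`:
`P_0(x) = ∀ y ¬(π(y) = x)` and `P_{i+1}(x) = ∀ y (π(y) = x → ¬ P_i(y))`. -/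
def Pform : ℕ → FOFormula
  | 0 => .all (.not (.parentOf (.var 1) (.var 0)))
  | i + 1 => .all (.imp (.parentOf (.var 1) (.var 0)) (.not (Pform i)))

/-- The sentence `KEIN_i = P_i(R)`. -/
def KEIN : ℕ → FOFormula
  | 0 => .all (.not (.parentOf .root (.var 0)))
  | i + 1 => .all (.imp (.parentOf .root (.var 0)) (.not (Pform i)))

/-! ## Ehrenfeucht games -/

/-- The winning condition for Duplicator: for all pairs `(x_i, y_i)`, `(x_j, y_j)`
in the list of selected/designated pairs, (Main 1) `π(x_j) = x_i ↔ π(y_j) = y_i`,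
and (Main 2) `x_i = x_j ↔ y_i = y_j`. -/
def GoodPairs (T₁ T₂ : RTree) (ps : List (T₁.V × T₂.V)) : Prop :=
  ∀ p ∈ ps, ∀ q ∈ ps,
    (T₁.parent p.1 = some q.1 ↔ T₂.parent p.2 = some q.2) ∧
    (p.1 = q.1 ↔ p.2 = q.2)

/-- Duplicator wins the scheduled Ehrenfeucht game on `T₁, T₂` in which Spoiler
must play his moves in consecutive batches, the batch sizes given by the list
`sched`, switching trees after each batch; `side = true` means Spoiler currently
plays on `T₁` (Duplicator answering on `T₂`), `side = false` means Spoiler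
currently plays on `T₂`.  The list `ps` records the pairs selected so far
(including designated pairs and the pair of roots); Duplicator wins when the
final configuration satisfies `GoodPairs`. -/
def DupWinsSched (T₁ T₂ : RTree) : List ℕ → Bool → List (T₁.V × T₂.V) → Prop
  | [], _, ps => GoodPairs T₁ T₂ ps
  | 0 :: rest, side, ps => DupWinsSched T₁ T₂ rest (!side) ps
  | (n + 1) :: rest, side, ps =>
      if side then
        ∀ x : T₁.V, ∃ y : T₂.V, DupWinsSched T₁ T₂ (n :: rest) side ((x, y) :: ps)
      else
        ∀ y : T₂.V, ∃ x : T₁.V, DupWinsSched T₁ T₂ (n :: rest) side ((x, y) :: ps)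
termination_by sched _ _ => (sched.length, sched.sum)
decreasing_by
  all_goals
    first
      | exact Prod.Lex.left _ _ (Nat.lt_succ_self _)
      | exact Prod.Lex.right _ (by simp [List.sum_cons])

/-- The cost (in switches) for Spoiler of playing on side `side` when his
previous move (if any) was on side `last`. -/
def switchCost (last : Option Bool) (side : Bool) : ℕ :=
  match last with
  | none => 0
  | some b => if b = side then 0 else 1

/-- Duplicator wins the Ehrenfeucht game `EHR` with `rounds` remaining rounds,
`sw` remaining switches allowed to Spoiler, `last` the side on which Spoiler
made his previous move (if any), and `ps` the pairs selected so far.  In each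
round Spoiler picks a side (paying a switch if he changes trees, which he may
do only if he has switches left) and a vertex in that tree, and Duplicator
answers in the other tree. -/
def DupWinsEHRAux (T₁ T₂ : RTree) :
    ℕ → ℕ → Option Bool → List (T₁.V × T₂.V) → Prop
  | 0, _, _, ps => GoodPairs T₁ T₂ ps
  | r + 1, sw, last, ps =>
      ∀ side : Bool, switchCost last side ≤ sw →
        if side then
          ∀ x : T₁.V, ∃ y : T₂.V,
            DupWinsEHRAux T₁ T₂ r (sw - switchCost last side) (some side) ((x, y) :: ps)
        else
          ∀ y : T₂.V, ∃ x : T₁.V,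
            DupWinsEHRAux T₁ T₂ r (sw - switchCost last side) (some side) ((x, y) :: ps)

/-- Duplicator wins the game `EHR[T₁, T₂, s, r]`: `r` rounds, Spoiler may start
on either tree and make at most `s` switches. -/
def DupWinsEHR (T₁ T₂ : RTree) (s r : ℕ) : Prop :=
  DupWinsEHRAux T₁ T₂ r s none [(T₁.root, T₂.root)]

/-! ## The trees `T₁^{(s,k,m)}` and `T₂^{(s,k,m)}` -/

/-- The one-vertex rooted tree. -/
def single : RTree where
  V := PUnit
  root := PUnit.unit
  parent := fun _ => none

/-- Hang the trees `f 0, …, f (n-1)` from a new root: the root of each `f i`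
becomes a child of the new root. -/
def hang (n : ℕ) (f : Fin n → RTree) : RTree where
  V := Unit ⊕ (Σ i : Fin n, (f i).V)
  root := Sum.inl ()
  parent := fun x =>
    match x with
    | Sum.inl _ => none
    | Sum.inr ⟨i, w⟩ =>
      match (f i).parent w with
      | none => some (Sum.inl ())
      | some w' => some (Sum.inr ⟨i, w'⟩)

/-- The pair of trees `(T₁^{(s,k,m)}, T₂^{(s,k,m)})`, indexed by `s` (the
parameter `k` plays no role in the construction).  Conventions for `s = 0`:
`T₁^{(0)}` is a single vertex and `T₂^{(0)}` is a star of `m` childless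
children.  For `s ≥ 1`: in `T₁^{(s+1)}` the root has `m+1` children, from each
of which hangs a copy of `T₂^{(s)}`; in `T₂^{(s+1)}` the root has `m+1`
children, from `m` of which hangs a copy of `T₂^{(s)}` and from the remaining
one hangs a copy of `T₁^{(s)}`. -/
def TreePair (m : ℕ) : ℕ → RTree × RTree
  | 0 => (single, hang m fun _ => single)
  | s + 1 =>
      (hang (m + 1) fun _ => (TreePair m s).2,
       hang (m + 1) fun i => if i.1 = m then (TreePair m s).1 else (TreePair m s).2)

/-- The tree `T₁^{(s,k,m)}`. -/
def Tree1 (s k m : ℕ) : RTree := (TreePair m s).1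

/-- The tree `T₂^{(s,k,m)}`. -/
def Tree2 (s k m : ℕ) : RTree := (TreePair m s).2


namespace EHRX

/-- Penalty of a "last move" marker: `some true` is the best state for
Duplicator (switching to tree2 costs Spoiler a switch). -/
def epsc : Option Bool → ℕ
  | some true => 0
  | _ => 1

/-- `stLE p q`: state `p = (budget, last)` gives Spoiler no more power than `q`. -/
def stLE (p q : ℕ × Option Bool) : Prop :=
  ∀ side : Bool, switchCost p.2 side ≤ p.1 →
    switchCost q.2 side ≤ q.1 ∧ p.1 - switchCost p.2 side ≤ q.1 - switchCost q.2 side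

lemma stLE_refl (p) : stLE p p := fun _ h => ⟨h, le_rfl⟩

lemma stLE_step {sw : ℕ} {l : Option Bool} {side : Bool}
    (h : switchCost l side ≤ sw) :
    stLE (sw - switchCost l side, some side) (sw, l) := by
  intro side' h'
  cases l with
  | none => cases side <;> cases side' <;> simp_all [switchCost] <;> omega
  | some b => cases b <;> cases side <;> cases side' <;> simp_all [switchCost] <;> omega

lemma stLE_eps {p q : ℕ × Option Bool} {t : ℕ} (h : stLE p q) (hq : q.1 + epsc q.2 ≤ t) :
    p.1 + epsc p.2 ≤ t := by
  obtain ⟨sw', l'⟩ := p; obtain ⟨sw, l⟩ := q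
  rcases l' with _ | b'
  · have := h false (by simp [switchCost])
    rcases l with _ | b
    · simp [switchCost, epsc] at *; omega
    · cases b <;> simp [switchCost, epsc] at * <;> omega
  · cases b'
    · have := h false (by simp [switchCost])
      rcases l with _ | b
      · simp [switchCost, epsc] at *; omega
      · cases b <;> simp [switchCost, epsc] at * <;> omega
    · have := h true (by simp [switchCost])
      rcases l with _ | b
      · simp [switchCost, epsc] at *; omega
      · cases b <;> simp [switchCost, epsc] at * <;> omega

/-- An invariant family (back-and-forth system with switch budget) for the
pair of trees `(S, T)` and at most `k` selected pairs. -/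
structure Fam (k : ℕ) (S T : RTree) where
  J : ℕ → Option Bool → List (S.V × T.V) → Prop
  good : ∀ {sw l ps}, J sw l ps → GoodPairs S T ps
  mono : ∀ {sw l sw' l' ps}, stLE (sw', l') (sw, l) → J sw l ps → J sw' l' ps
  forth : ∀ {sw l ps}, J sw l ps → ps.length ≤ k → switchCost l true ≤ sw →
      ∀ x : S.V, ∃ y : T.V, J (sw - switchCost l true) (some true) ((x, y) :: ps)
  back : ∀ {sw l ps}, J sw l ps → ps.length ≤ k → switchCost l false ≤ sw →
      ∀ y : T.V, ∃ x : S.V, J (sw - switchCost l false) (some false) ((x, y) :: ps)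

/-- An invariant family yields a win for Duplicator. -/
lemma Fam.wins {k : ℕ} {S T : RTree} (F : Fam k S T) :
    ∀ (r : ℕ) {sw : ℕ} {l : Option Bool} {ps : List (S.V × T.V)},
      F.J sw l ps → ps.length + r ≤ k + 1 → DupWinsEHRAux S T r sw l ps := by
  intro r
  induction r with
  | zero => intro sw l ps h _; exact F.good h
  | succ n ih =>
    intro sw l ps h hlen side hc
    have hps : ps.length ≤ k := by omega
    cases side with
    | false =>
      simp only [Bool.false_eq_true, if_false]
      intro y
      obtain ⟨x, hx⟩ := F.back h hps hc y
      exact ⟨x, ih hx (by simp; omega)⟩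
    | true =>
      simp only [if_true]
      intro x
      obtain ⟨y, hy⟩ := F.forth h hps hc x
      exact ⟨y, ih hy (by simp; omega)⟩

end EHRX

namespace EHRX

def negO (l : Option Bool) : Option Bool := l.map (fun b => !b)

lemma switchCost_negO (l : Option Bool) (side : Bool) :
    switchCost (negO l) side = switchCost l (!side) := by
  rcases l with _ | b
  · rfl
  · cases b <;> cases side <;> simp [negO, switchCost]

lemma stLE_negO {p q : ℕ × Option Bool} (h : stLE p q) :
    stLE (p.1, negO p.2) (q.1, negO q.2) := by
  intro side hc
  simp only [switchCost_negO] at *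
  exact h (!side) hc

lemma goodPairs_swap {S T : RTree} {ps : List (T.V × S.V)}
    (h : GoodPairs S T (ps.map Prod.swap)) : GoodPairs T S ps := by
  intro p hp q hq
  have := h p.swap (List.mem_map_of_mem hp) q.swap (List.mem_map_of_mem hq)
  exact ⟨this.1.symm, this.2.symm⟩

/-- Swap the two trees of an invariant family. -/
def Fam.swap {k : ℕ} {S T : RTree} (F : Fam k S T) : Fam k T S where
  J sw l ps := F.J sw (negO l) (ps.map Prod.swap)
  good h := goodPairs_swap (F.good h)
  mono hle h := F.mono (stLE_negO hle) h
  forth := by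
    intro sw l ps h hlen hc x
    have hc' : switchCost (negO l) false ≤ sw := by rwa [switchCost_negO]
    obtain ⟨y, hy⟩ := F.back h (by simpa using hlen) hc' x
    refine ⟨y, ?_⟩
    rw [show switchCost l true = switchCost (negO l) false from (switchCost_negO l false).symm]
    simpa [negO] using hy
  back := by
    intro sw l ps h hlen hc y
    have hc' : switchCost (negO l) true ≤ sw := by rwa [switchCost_negO]
    obtain ⟨x, hx⟩ := F.forth h (by simpa using hlen) hc' y
    refine ⟨x, ?_⟩
    rw [show switchCost l false = switchCost (negO l) true from (switchCost_negO l true).symm]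
    simpa [negO] using hx

def isoRefl (S : RTree) : TreeIso S S :=
  ⟨Equiv.refl _, rfl, fun v => by simp⟩

def isoOfEq {S T : RTree} (h : S = T) : TreeIso S T := h ▸ isoRefl S

lemma iso_symm_root {S T : RTree} (ι : TreeIso S T) :
    ι.toEquiv.symm T.root = S.root := by
  rw [← ι.map_root]; simp

lemma iso_parent_iff {S T : RTree} (ι : TreeIso S T) (v w : T.V) :
    T.parent v = some w ↔ S.parent (ι.toEquiv.symm v) = some (ι.toEquiv.symm w) := by
  have h := ι.map_parent (ι.toEquiv.symm v)
  simp only [Equiv.apply_symm_apply] at h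
  rw [← h, Option.map_eq_some_iff]
  constructor
  · rintro ⟨a, ha, rfl⟩; rwa [Equiv.symm_apply_apply]
  · intro hh; exact ⟨_, hh, by simp⟩

/-- Transport an invariant family along an isomorphism of the right tree. -/
def Fam.transR {k : ℕ} {S T T' : RTree} (F : Fam k S T) (ι : TreeIso T T') : Fam k S T' where
  J sw l ps := F.J sw l (ps.map fun p => (p.1, ι.toEquiv.symm p.2))
  good := by
    intro sw l ps h p hp q hq
    have := F.good h (p.1, ι.toEquiv.symm p.2)
      (List.mem_map_of_mem hp) (q.1, ι.toEquiv.symm q.2) (List.mem_map_of_mem hq)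
    refine ⟨this.1.trans (iso_parent_iff ι _ _).symm, this.2.trans ?_⟩
    exact ⟨fun hh => ι.toEquiv.symm.injective hh, fun hh => by rw [hh]⟩
  mono := by
    intro sw l sw' l' ps hle h
    exact F.mono hle h
  forth := by
    intro sw l ps h hlen hc x
    obtain ⟨y, hy⟩ := F.forth h (by simpa using hlen) hc x
    exact ⟨ι.toEquiv y, by simpa using hy⟩
  back := by
    intro sw l ps h hlen hc y
    obtain ⟨x, hx⟩ := F.back h (by simpa using hlen) hc (ι.toEquiv.symm y)
    exact ⟨x, by simpa using hx⟩

/-- The identity family on a tree. -/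
def idFam (k : ℕ) (S : RTree) : Fam k S S where
  J _ _ ps := ∀ p ∈ ps, p.1 = p.2
  good := by
    intro sw l ps h p hp q hq
    rw [h p hp, h q hq]; exact ⟨Iff.rfl, Iff.rfl⟩
  mono := by intro _ _ _ _ _ _ h; exact h
  forth := by
    intro sw l ps h _ _ x
    refine ⟨x, ?_⟩
    intro p hp
    rcases List.mem_cons.1 hp with rfl | hp
    · rfl
    · exact h p hp
  back := by
    intro sw l ps h _ _ y
    refine ⟨y, ?_⟩
    intro p hp
    rcases List.mem_cons.1 hp with rfl | hp
    · rfl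
    · exact h p hp

/-- Base family for `(single, star)`. -/
def baseFam (k m : ℕ) : Fam k single (hang m fun _ => single) where
  J sw l ps := sw = 0 ∧ l = some true ∧
    ∀ p ∈ ps, p = (single.root, (hang m fun _ => single).root)
  good := by
    intro sw l ps h p hp q hq
    rw [h.2.2 p hp, h.2.2 q hq]
    constructor
    · constructor <;> intro hh <;> simp [single, hang] at hh
    · exact ⟨fun _ => rfl, fun _ => rfl⟩
  mono := by
    rintro sw l sw' l' ps hle ⟨rfl, rfl, h⟩
    rcases l' with _ | b'
    · have := hle false (by simp [switchCost])
      simp [switchCost] at this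
    · cases b'
      · have := hle false (by simp [switchCost])
        simp [switchCost] at this
      · have := hle true (by simp [switchCost])
        simp [switchCost] at this
        exact ⟨by omega, rfl, h⟩
  forth := by
    rintro sw l ps ⟨rfl, rfl, h⟩ _ hc x
    refine ⟨(hang m fun _ => single).root, rfl, rfl, ?_⟩
    intro p hp
    rcases List.mem_cons.1 hp with rfl | hp
    · rfl
    · exact h p hp
  back := by
    rintro sw l ps ⟨rfl, rfl, h⟩ _ hc y
    simp [switchCost] at hc

/-! ### lemmas about `hang` -/

lemma hang_parent_inl (n : ℕ) (f : Fin n → RTree) :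
    (hang n f).parent (Sum.inl ()) = none := rfl

lemma hang_parent_none_iff (n : ℕ) (f : Fin n → RTree) (v : (hang n f).V) :
    (hang n f).parent v = none ↔ v = (hang n f).root := by
  rcases v with u | ⟨i, w⟩
  · simp [hang]
  · cases h : (f i).parent w <;> simp [hang, h]

lemma hang_parent_root_iff (n : ℕ) (f : Fin n → RTree) (i : Fin n) (w : (f i).V) :
    (hang n f).parent (Sum.inr ⟨i, w⟩) = some (hang n f).root ↔ (f i).parent w = none := by
  cases h : (f i).parent w <;> simp [hang, h]

lemma hang_parent_inr_same (n : ℕ) (f : Fin n → RTree) (i : Fin n) (w w' : (f i).V) :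
    (hang n f).parent (Sum.inr ⟨i, w⟩) = some (Sum.inr ⟨i, w'⟩) ↔ (f i).parent w = some w' := by
  cases h : (f i).parent w <;> simp [hang, h]

lemma hang_parent_inr_ne (n : ℕ) (f : Fin n → RTree) (i i' : Fin n) (hne : i ≠ i')
    (w : (f i).V) (w' : (f i').V) :
    ¬ (hang n f).parent (Sum.inr ⟨i, w⟩) = some (Sum.inr ⟨i', w'⟩) := by
  cases h : (f i).parent w <;> simp [hang, h, hne]

lemma hang_not_parent_of_root (n : ℕ) (f : Fin n → RTree) (x : (hang n f).V) :
    ¬ (hang n f).parent (hang n f).root = some x := by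
  simp [hang]

end EHRX

namespace EHRX

lemma exists_fresh {n : ℕ} (L : List (Fin n)) (h : L.length < n) : ∃ j : Fin n, j ∉ L := by
  by_contra hcon
  push_neg at hcon
  have hsub : (Finset.univ : Finset (Fin n)) ⊆ L.toFinset := fun j _ => List.mem_toFinset.2 (hcon j)
  have h1 := Finset.card_le_card hsub
  have h2 := L.toFinset_card_le
  simp only [Finset.card_univ, Fintype.card_fin] at h1
  omega

section Step

variable (k m : ℕ) (A B : RTree)

/-- The bigger tree `T₁^{(s+1)}`. -/
abbrev Sbig : RTree := hang (m + 1) fun _ => B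

/-- The branches of the bigger tree `T₂^{(s+1)}`. -/
abbrev Fbr : Fin (m + 1) → RTree := fun i => if i.1 = m then A else B

/-- The bigger tree `T₂^{(s+1)}`. -/
abbrev Tbig : RTree := hang (m + 1) (Fbr m A B)

/-- The pair `p` of vertices lies in the matched pair of branches `(i, j)`. -/
def inBr (i j : Fin (m + 1)) : (Sbig m B).V × (Tbig m A B).V → Bool :=
  fun p => match p with
  | (Sum.inr ⟨i', _⟩, Sum.inr ⟨j', _⟩) => decide (i' = i) && decide (j' = j)
  | _ => false

/-- Interpret a pair of branch vertices as a pair of vertices of the big trees. -/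
def realize (i j : Fin (m + 1)) (q : B.V × (Fbr m A B j).V) :
    (Sbig m B).V × (Tbig m A B).V :=
  (Sum.inr ⟨i, q.1⟩, Sum.inr ⟨j, q.2⟩)

lemma inBr_root (i j : Fin (m + 1)) :
    inBr m A B i j ((Sbig m B).root, (Tbig m A B).root) = false := rfl

lemma inBr_realize (i j : Fin (m + 1)) (q : B.V × (Fbr m A B j).V) :
    inBr m A B i j (realize m A B i j q) = true := by
  simp [inBr, realize]

lemma inBr_realize_ne {i j i' j' : Fin (m + 1)} (h : i' ≠ i ∨ j' ≠ j)
    (q : B.V × (Fbr m A B j).V) :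
    inBr m A B i' j' (realize m A B i j q) = false := by
  rcases h with h | h <;> simp [inBr, realize] <;> tauto

lemma inBr_unique {i j i' j' : Fin (m + 1)} {p : (Sbig m B).V × (Tbig m A B).V}
    (h : inBr m A B i j p = true) (h' : inBr m A B i' j' p = true) : i = i' ∧ j = j' := by
  rcases p with ⟨x, y⟩
  rcases x with u | ⟨i₀, v⟩ <;> rcases y with u' | ⟨j₀, w⟩ <;>
    simp [inBr] at h h' <;> cases h.1 <;> cases h.2 <;> cases h'.1 <;> cases h'.2 <;>
    exact ⟨rfl, rfl⟩

lemma inBr_shape {i j : Fin (m + 1)} {p : (Sbig m B).V × (Tbig m A B).V}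
    (h : inBr m A B i j p = true) :
    ∃ v w, p = realize m A B i j (v, w) := by
  rcases p with ⟨x, y⟩
  rcases x with u | ⟨i₀, v⟩ <;> rcases y with u' | ⟨j₀, w⟩ <;> simp [inBr] at h
  obtain ⟨rfl, rfl⟩ := h
  exact ⟨v, w, rfl⟩

variable (F : Fam k A B)

/-- The branch strategy family for branch `j` of `Tbig` against a `B`-branch of `Sbig`:
identity for non-anomalous branches, the (swapped) inductive family for the anomalous one. -/
noncomputable def Phi (j : Fin (m + 1)) : Fam k B (Fbr m A B j) :=
  if h : j.1 = m then (F.swap).transR (isoOfEq (if_pos h).symm)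
  else (idFam k B).transR (isoOfEq (if_neg h).symm)

/-- The within-branch invariant for the matched pair of branches `(i, j)`. -/
def BrCond (i j : Fin (m + 1)) (sw : ℕ) (l : Option Bool)
    (ps : List ((Sbig m B).V × (Tbig m A B).V)) : Prop :=
  ∃ qs : List (B.V × (Fbr m A B j).V),
    (Phi k m A B F j).J sw l (qs ++ [(B.root, (Fbr m A B j).root)]) ∧
    qs.length < ps.length ∧
    ps.filter (inBr m A B i j) = qs.map (realize m A B i j)

/-- The global invariant for the level `s+1` game. -/
def Inv (s sw : ℕ) (l : Option Bool)
    (ps : List ((Sbig m B).V × (Tbig m A B).V)) : Prop :=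
  sw + epsc l ≤ s + 1 ∧
  ((Sbig m B).root, (Tbig m A B).root) ∈ ps ∧
  ∃ M : List (Fin (m + 1) × Fin (m + 1)),
    (∀ a ∈ M, ∀ b ∈ M, (a.1 = b.1 ↔ a.2 = b.2)) ∧
    M.length + 1 ≤ ps.length ∧
    (∀ p ∈ ps, p = ((Sbig m B).root, (Tbig m A B).root) ∨
      ∃ a ∈ M, inBr m A B a.1 a.2 p = true) ∧
    (∀ a ∈ M, BrCond k m A B F a.1 a.2 sw l ps)

lemma mem_qs_of {i j : Fin (m + 1)} {qs : List (B.V × (Fbr m A B j).V)}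
    {p : (Sbig m B).V × (Tbig m A B).V} {ps : List _}
    (hfil : ps.filter (inBr m A B i j) = qs.map (realize m A B i j))
    (hp : p ∈ ps) (hb : inBr m A B i j p = true) :
    ∃ v w, p = realize m A B i j (v, w) ∧ (v, w) ∈ qs := by
  have hmem : p ∈ qs.map (realize m A B i j) := by
    rw [← hfil]; exact List.mem_filter.2 ⟨hp, hb⟩
  obtain ⟨q', hq', he⟩ := List.mem_map.1 hmem
  exact ⟨q'.1, q'.2, he.symm, hq'⟩

end Step

end EHRX

namespace EHRX

section Step2

variable {k m : ℕ} {A B : RTree} {F : Fam k A B}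


lemma inr_mk_eq_iff {n : ℕ} {f : Fin n → RTree} (i : Fin n) (v v' : (f i).V) :
    (Sum.inr ⟨i, v⟩ : (hang n f).V) = Sum.inr ⟨i, v'⟩ ↔ v = v' := by
  constructor
  · intro h
    injection h with h2
    exact eq_of_heq (Sigma.ext_iff.mp h2).2
  · rintro rfl; rfl

lemma inr_mk_ne {n : ℕ} {f : Fin n → RTree} {i i' : Fin n} (h : ¬ i = i')
    (v : (f i).V) (v' : (f i').V) :
    ¬ (Sum.inr ⟨i, v⟩ : (hang n f).V) = Sum.inr ⟨i', v'⟩ := by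
  intro hh
  injection hh with h2
  exact h (congrArg Sigma.fst h2)

lemma root_iff_Fbr (hrA : ∀ v, A.parent v = none ↔ v = A.root)
    (hrB : ∀ v, B.parent v = none ↔ v = B.root) (j : Fin (m + 1)) :
    ∀ w, (Fbr m A B j).parent w = none ↔ w = (Fbr m A B j).root := by
  by_cases h : j.1 = m
  · have e : Fbr m A B j = A := by simp [Fbr, h]
    rw [e]; exact hrA
  · have e : Fbr m A B j = B := by simp [Fbr, h]
    rw [e]; exact hrB

lemma Phi_init_id (j : Fin (m + 1)) (hj : ¬ j.1 = m) (sw : ℕ) (l : Option Bool) :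
    (Phi k m A B F j).J sw l [(B.root, (Fbr m A B j).root)] := by
  simp only [Phi, dif_neg hj]
  show ∀ p ∈ List.map _ _, _
  intro p hp
  simp only [List.map_cons, List.map_nil, List.mem_singleton] at hp
  subst hp
  exact (iso_symm_root _).symm

lemma Phi_init_anom {s : ℕ}
    (hFinit : ∀ sw l, sw + epsc l ≤ s → F.J sw l [(A.root, B.root)])
    (j : Fin (m + 1)) (hj : j.1 = m) (sw : ℕ) (l : Option Bool)
    (h : sw + epsc (negO l) ≤ s) :
    (Phi k m A B F j).J sw l [(B.root, (Fbr m A B j).root)] := by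
  simp only [Phi, dif_pos hj]
  show (Fam.swap F).J sw l (List.map _ _)
  have : (List.map (fun p => (p.1, (isoOfEq (if_pos hj : Fbr m A B j = A).symm).toEquiv.symm p.2))
      [(B.root, (Fbr m A B j).root)]) = [(B.root, A.root)] := by
    simp [iso_symm_root]
  rw [this]
  show F.J sw (negO l) (List.map Prod.swap [(B.root, A.root)])
  simpa using hFinit sw (negO l) h

/-- Goodness of the global invariant. -/
lemma Inv_good {s sw : ℕ} {l : Option Bool} {ps : List ((Sbig m B).V × (Tbig m A B).V)}
    (hrA : ∀ v, A.parent v = none ↔ v = A.root)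
    (hrB : ∀ v, B.parent v = none ↔ v = B.root)
    (hInv : Inv k m A B F s sw l ps) :
    GoodPairs (Sbig m B) (Tbig m A B) ps := by
  obtain ⟨hbud, hroot, M, hinj, hMlen, hshape, hbr⟩ := hInv
  intro p hp q hq
  rcases hshape p hp with hpR | ⟨a, haM, hpB⟩
  · rcases hshape q hq with hqR | ⟨b, hbM, hqB⟩
    · subst hpR; subst hqR
      refine ⟨⟨fun h => absurd h (hang_not_parent_of_root _ _ _),
              fun h => absurd h (hang_not_parent_of_root _ _ _)⟩, by simp⟩
    · -- p root, q in a branch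
      subst hpR
      obtain ⟨qs, hJ, hqlen, hfil⟩ := hbr b hbM
      obtain ⟨v, w, rfl, hmem⟩ := mem_qs_of m A B hfil hq hqB
      refine ⟨⟨fun h => absurd h (hang_not_parent_of_root _ _ _),
              fun h => absurd h (hang_not_parent_of_root _ _ _)⟩, ?_⟩
      simp [realize, Sbig, Tbig, hang]
  · obtain ⟨qs, hJ, hqlen, hfil⟩ := hbr a haM
    obtain ⟨v, w, rfl, hmem⟩ := mem_qs_of m A B hfil hp hpB
    have hGsub := (Phi k m A B F a.2).good hJ
    have hvw : ((v, w) : B.V × (Fbr m A B a.2).V) ∈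
        qs ++ [(B.root, (Fbr m A B a.2).root)] := List.mem_append_left _ hmem
    rcases hshape q hq with hqR | ⟨b, hbM, hqB⟩
    · -- p in branch, q root
      subst hqR
      have hsub := hGsub (v, w) hvw (B.root, (Fbr m A B a.2).root)
        (List.mem_append_right _ (by simp))
      constructor
      · show (Sbig m B).parent (Sum.inr ⟨a.1, v⟩) = some (Sbig m B).root ↔
          (Tbig m A B).parent (Sum.inr ⟨a.2, w⟩) = some (Tbig m A B).root
        rw [hang_parent_root_iff, hang_parent_root_iff, hrB, root_iff_Fbr hrA hrB]
        exact hsub.2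
      · simp [realize, Sbig, Tbig, hang]
    · -- both in branches
      obtain ⟨qs', hJ', hqlen', hfil'⟩ := hbr b hbM
      obtain ⟨v', w', rfl, hmem'⟩ := mem_qs_of m A B hfil' hq hqB
      by_cases hab : a.1 = b.1
      · have hab2 : a.2 = b.2 := (hinj a haM b hbM).1 hab
        have habe : a = b := Prod.ext hab hab2
        subst habe
        -- same branch: both in qs (note hfil = hfil' as propositions on same data)
        have hmem2 : ((v', w') : B.V × (Fbr m A B a.2).V) ∈ qs := by
          have h1 := mem_qs_of m A B hfil hq hqB
          obtain ⟨v2, w2, he, hm2⟩ := h1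
          simp only [realize, Prod.mk.injEq] at he
          obtain ⟨hx, hy⟩ := he
          exact hm2
        have hvw' : ((v', w') : B.V × (Fbr m A B a.2).V) ∈
            qs ++ [(B.root, (Fbr m A B a.2).root)] := List.mem_append_left _ hmem2
        have hsub := hGsub (v, w) hvw (v', w') hvw'
        constructor
        · show (Sbig m B).parent (Sum.inr ⟨a.1, v⟩) = some (Sum.inr ⟨a.1, v'⟩) ↔
            (Tbig m A B).parent (Sum.inr ⟨a.2, w⟩) = some (Sum.inr ⟨a.2, w'⟩)
          rw [hang_parent_inr_same, hang_parent_inr_same]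
          exact hsub.1
        · show (Sum.inr ⟨a.1, v⟩ : (Sbig m B).V) = Sum.inr ⟨a.1, v'⟩ ↔
            (Sum.inr ⟨a.2, w⟩ : (Tbig m A B).V) = Sum.inr ⟨a.2, w'⟩
          rw [inr_mk_eq_iff (f := fun _ => B) a.1 v v',
            inr_mk_eq_iff (f := Fbr m A B) a.2 w w']
          exact hsub.2
      · have hab2 : ¬ a.2 = b.2 := fun h => hab ((hinj a haM b hbM).2 h)
        constructor
        · constructor
          · intro h; exact absurd h (hang_parent_inr_ne _ _ _ _ hab _ _)
          · intro h; exact absurd h (hang_parent_inr_ne _ _ _ _ hab2 _ _)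
        · show (Sum.inr ⟨a.1, v⟩ : (Sbig m B).V) = Sum.inr ⟨b.1, v'⟩ ↔
            (Sum.inr ⟨a.2, w⟩ : (Tbig m A B).V) = Sum.inr ⟨b.2, w'⟩
          constructor
          · intro hh; exact absurd hh (inr_mk_ne (f := fun _ => B) hab _ _)
          · intro hh; exact absurd hh (inr_mk_ne (f := Fbr m A B) hab2 _ _)

end Step2

end EHRX

namespace EHRX

section Step3

variable {k m : ℕ} {A B : RTree} {F : Fam k A B}

lemma budget_after {s sw : ℕ} {l : Option Bool} {side : Bool}
    (hbud : sw + epsc l ≤ s + 1) (hc : switchCost l side ≤ sw) :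
    (sw - switchCost l side) + epsc (some side) ≤ s + 1 := by
  cases side <;> rcases l with _ | b <;> first
    | (simp [switchCost, epsc] at *; omega)
    | (cases b <;> simp [switchCost, epsc] at * <;> omega)

lemma budget_anom {s sw : ℕ} {l : Option Bool}
    (hbud : sw + epsc l ≤ s + 1) (hc : switchCost l false ≤ sw) :
    sw - switchCost l false ≤ s := by
  rcases l with _ | b
  · simp [switchCost, epsc] at *; omega
  · cases b <;> simp [switchCost, epsc] at * <;> omega

lemma inBr_pair (i j : Fin (m + 1)) (v : B.V) (w : (Fbr m A B j).V) :
    inBr m A B i j ((Sum.inr ⟨i, v⟩ : (Sbig m B).V), (Sum.inr ⟨j, w⟩ : (Tbig m A B).V)) = true := by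
  simp [inBr]

lemma inBr_pair_ne {i j i' j' : Fin (m + 1)} (h : i' ≠ i ∨ j' ≠ j)
    (v : B.V) (w : (Fbr m A B j).V) :
    inBr m A B i' j' ((Sum.inr ⟨i, v⟩ : (Sbig m B).V), (Sum.inr ⟨j, w⟩ : (Tbig m A B).V)) = false := by
  rcases h with h | h <;> simp [inBr] <;> tauto

lemma Inv_mono {s sw sw' : ℕ} {l l' : Option Bool} {ps : List ((Sbig m B).V × (Tbig m A B).V)}
    (hle : stLE (sw', l') (sw, l)) (h : Inv k m A B F s sw l ps) :
    Inv k m A B F s sw' l' ps := by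
  obtain ⟨hbud, hroot, M, hinj, hMlen, hshape, hbr⟩ := h
  refine ⟨stLE_eps hle hbud, hroot, M, hinj, hMlen, hshape, fun a ha => ?_⟩
  obtain ⟨qs, hJ, h1, h2⟩ := hbr a ha
  exact ⟨qs, (Phi k m A B F a.2).mono hle hJ, h1, h2⟩

lemma Inv_forth {s : ℕ} (hkm : k ≤ m) :
    ∀ {sw : ℕ} {l : Option Bool} {ps : List ((Sbig m B).V × (Tbig m A B).V)},
      Inv k m A B F s sw l ps → ps.length ≤ k → switchCost l true ≤ sw →
      ∀ x : (Sbig m B).V, ∃ y : (Tbig m A B).V,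
        Inv k m A B F s (sw - switchCost l true) (some true) ((x, y) :: ps) := by
  intro sw l ps hInv hlen hc x
  obtain ⟨hbud, hroot, M, hinj, hMlen, hshape, hbr⟩ := hInv
  have hbud' : (sw - switchCost l true) + epsc (some true) ≤ s + 1 := budget_after hbud hc
  have hps1 : 1 ≤ ps.length := List.length_pos_iff.2 (by rintro rfl; simp at hroot)
  have hk1 : 1 ≤ k := le_trans hps1 hlen
  have hstep := stLE_step (l := l) (side := true) hc
  rcases x with u | ⟨i, v⟩
  · -- root move
    cases u
    refine ⟨(Tbig m A B).root, hbud', List.mem_cons_of_mem _ hroot, M, hinj,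
      hMlen.trans (Nat.le_succ _), ?_, ?_⟩
    · intro p hp
      rcases List.mem_cons.1 hp with rfl | hp
      · left; rfl
      · exact hshape p hp
    · intro a ha
      obtain ⟨qs, hJ, h1, h2⟩ := hbr a ha
      refine ⟨qs, (Phi k m A B F a.2).mono hstep hJ, by simp; omega, ?_⟩
      rw [List.filter_cons_of_neg (fun h => Bool.false_ne_true h)]
      exact h2
  · by_cases hM : ∃ j, (i, j) ∈ M
    · -- already matched branch
      obtain ⟨j, hij⟩ := hM
      obtain ⟨qs, hJ, hqlen, hfil⟩ := hbr (i, j) hij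
      have hguard : (qs ++ [(B.root, (Fbr m A B j).root)]).length ≤ k := by simp; omega
      obtain ⟨w, hw⟩ := (Phi k m A B F j).forth hJ hguard hc v
      refine ⟨Sum.inr ⟨j, w⟩, hbud', List.mem_cons_of_mem _ hroot, M, hinj,
        hMlen.trans (Nat.le_succ _), ?_, ?_⟩
      · intro p hp
        rcases List.mem_cons.1 hp with rfl | hp
        · exact Or.inr ⟨(i, j), hij, inBr_realize m A B i j (v, w)⟩
        · exact hshape p hp
      · intro a ha
        by_cases hae : a = (i, j)
        · subst hae
          refine ⟨(v, w) :: qs, hw, by simp only [List.length_cons]; omega, ?_⟩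
          rw [List.filter_cons_of_pos (inBr_pair i j v w), hfil]
          rfl
        · have ha1 : a.1 ≠ i := by
            intro h1
            exact hae (Prod.ext h1 ((hinj a ha (i, j) hij).1 h1))
          obtain ⟨qs', hJ', h1', h2'⟩ := hbr a ha
          refine ⟨qs', (Phi k m A B F a.2).mono hstep hJ',
            by simp only [List.length_cons]; omega, ?_⟩
          rw [List.filter_cons_of_neg (by rw [inBr_pair_ne (Or.inl ha1)]; simp)]
          exact h2'
    · -- fresh branch on the left: pick a fresh non-anomalous branch on the right
      have hfl : ((⟨m, Nat.lt_succ_self m⟩ : Fin (m + 1)) :: M.map Prod.snd).length < m + 1 := by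
        simp only [List.length_cons, List.length_map]
        omega
      obtain ⟨j, hj⟩ := exists_fresh _ hfl
      have hjm : ¬ j.1 = m := by
        intro h
        exact hj (by
          have : j = ⟨m, Nat.lt_succ_self m⟩ := Fin.ext h
          rw [this]; exact List.mem_cons_self)
      have hjM : ∀ a ∈ M, a.2 ≠ j := fun a ha h2 =>
        hj (List.mem_cons_of_mem _ (List.mem_map.2 ⟨a, ha, h2⟩))
      have hinit := Phi_init_id (F := F) j hjm (sw - switchCost l true) (some true)
      obtain ⟨w, hw⟩ := (Phi k m A B F j).forth hinit (by simpa using hk1)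
        (by simp [switchCost]) v
      rw [show switchCost (some true) true = 0 from rfl, Nat.sub_zero] at hw
      refine ⟨Sum.inr ⟨j, w⟩, hbud', List.mem_cons_of_mem _ hroot, (i, j) :: M, ?_,
        by simp; omega, ?_, ?_⟩
      · intro a ha b hb
        rcases List.mem_cons.1 ha with rfl | ha <;> rcases List.mem_cons.1 hb with rfl | hb
        · exact ⟨fun _ => rfl, fun _ => rfl⟩
        · constructor
          · intro h1
            have h1' : i = b.1 := h1
            have hb' : (i, b.2) = b := by rw [h1']
            exact absurd ⟨b.2, by rw [hb']; exact hb⟩ hM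
          · intro h2
            exact absurd h2.symm (hjM b hb)
        · constructor
          · intro h1
            have h1' : a.1 = i := h1
            have ha' : (i, a.2) = a := by rw [← h1']
            exact absurd ⟨a.2, by rw [ha']; exact ha⟩ hM
          · intro h2
            exact absurd h2 (hjM a ha)
        · exact hinj a ha b hb
      · intro p hp
        rcases List.mem_cons.1 hp with rfl | hp
        · exact Or.inr ⟨(i, j), List.mem_cons_self, inBr_realize m A B i j (v, w)⟩
        · rcases hshape p hp with h | ⟨a, ha, hab⟩
          · exact Or.inl h
          · exact Or.inr ⟨a, List.mem_cons_of_mem _ ha, hab⟩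
      · intro a ha
        rcases List.mem_cons.1 ha with rfl | ha
        · refine ⟨[(v, w)], hw, by simp only [List.length_cons, List.length_nil]; omega, ?_⟩
          rw [List.filter_cons_of_pos (inBr_pair i j v w)]
          have hnil : List.filter (inBr m A B i j) ps = [] := by
            rw [List.filter_eq_nil_iff]
            intro p hp hbp
            rcases hshape p hp with rfl | ⟨b, hb, hbB⟩
            · exact absurd hbp (by rw [inBr_root m A B i j]; simp)
            · exact hM ⟨b.2, by
                have h1 := (inBr_unique m A B (by exact_mod_cast hbp) hbB).1
                rw [h1]; exact hb⟩
          rw [hnil]; rfl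
        · have ha1 : a.1 ≠ i := fun h1 => hM ⟨a.2, by
            have e : (i, a.2) = a := by rw [← h1]
            rw [e]; exact ha⟩
          obtain ⟨qs', hJ', h1', h2'⟩ := hbr a ha
          refine ⟨qs', (Phi k m A B F a.2).mono hstep hJ',
            by simp only [List.length_cons]; omega, ?_⟩
          rw [List.filter_cons_of_neg (by rw [inBr_pair_ne (Or.inl ha1)]; simp)]
          exact h2'

end Step3

end EHRX

namespace EHRX

section Step4

variable {k m : ℕ} {A B : RTree} {F : Fam k A B}

lemma Inv_back {s : ℕ} (hkm : k ≤ m)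
    (hFinit : ∀ sw l, sw + epsc l ≤ s → F.J sw l [(A.root, B.root)]) :
    ∀ {sw : ℕ} {l : Option Bool} {ps : List ((Sbig m B).V × (Tbig m A B).V)},
      Inv k m A B F s sw l ps → ps.length ≤ k → switchCost l false ≤ sw →
      ∀ y : (Tbig m A B).V, ∃ x : (Sbig m B).V,
        Inv k m A B F s (sw - switchCost l false) (some false) ((x, y) :: ps) := by
  intro sw l ps hInv hlen hc y
  obtain ⟨hbud, hroot, M, hinj, hMlen, hshape, hbr⟩ := hInv
  have hbud' : (sw - switchCost l false) + epsc (some false) ≤ s + 1 := budget_after hbud hc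
  have hps1 : 1 ≤ ps.length := List.length_pos_iff.2 (by rintro rfl; simp at hroot)
  have hk1 : 1 ≤ k := le_trans hps1 hlen
  have hstep := stLE_step (l := l) (side := false) hc
  rcases y with u | ⟨j, w⟩
  · -- root move
    cases u
    refine ⟨(Sbig m B).root, hbud', List.mem_cons_of_mem _ hroot, M, hinj,
      hMlen.trans (Nat.le_succ _), ?_, ?_⟩
    · intro p hp
      rcases List.mem_cons.1 hp with rfl | hp
      · left; rfl
      · exact hshape p hp
    · intro a ha
      obtain ⟨qs, hJ, h1, h2⟩ := hbr a ha
      refine ⟨qs, (Phi k m A B F a.2).mono hstep hJ, by simp only [List.length_cons]; omega, ?_⟩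
      rw [List.filter_cons_of_neg (fun h => Bool.false_ne_true h)]
      exact h2
  · by_cases hM : ∃ i, (i, j) ∈ M
    · -- already matched branch
      obtain ⟨i, hij⟩ := hM
      obtain ⟨qs, hJ, hqlen, hfil⟩ := hbr (i, j) hij
      have hguard : (qs ++ [(B.root, (Fbr m A B j).root)]).length ≤ k := by simp; omega
      obtain ⟨x', hx⟩ := (Phi k m A B F j).back hJ hguard hc w
      refine ⟨Sum.inr ⟨i, x'⟩, hbud', List.mem_cons_of_mem _ hroot, M, hinj,
        hMlen.trans (Nat.le_succ _), ?_, ?_⟩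
      · intro p hp
        rcases List.mem_cons.1 hp with rfl | hp
        · exact Or.inr ⟨(i, j), hij, inBr_pair i j x' w⟩
        · exact hshape p hp
      · intro a ha
        by_cases hae : a = (i, j)
        · subst hae
          refine ⟨(x', w) :: qs, hx, by simp only [List.length_cons]; omega, ?_⟩
          rw [List.filter_cons_of_pos (inBr_pair i j x' w), hfil]
          rfl
        · have ha2 : a.2 ≠ j := by
            intro h2
            exact hae (Prod.ext ((hinj a ha (i, j) hij).2 h2) h2)
          obtain ⟨qs', hJ', h1', h2'⟩ := hbr a ha
          refine ⟨qs', (Phi k m A B F a.2).mono hstep hJ',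
            by simp only [List.length_cons]; omega, ?_⟩
          rw [List.filter_cons_of_neg (by rw [inBr_pair_ne (Or.inr ha2)]; simp)]
          exact h2'
    · -- fresh branch on the right: pick a fresh branch on the left
      have hfl : (M.map Prod.fst).length < m + 1 := by
        simp only [List.length_map]
        omega
      obtain ⟨i, hi⟩ := exists_fresh _ hfl
      have hiM : ∀ a ∈ M, a.1 ≠ i := fun a ha h1 =>
        hi (List.mem_map.2 ⟨a, ha, h1⟩)
      have hinit : (Phi k m A B F j).J (sw - switchCost l false) (some false)
          [(B.root, (Fbr m A B j).root)] := by
        by_cases hjm : j.1 = m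
        · refine Phi_init_anom hFinit j hjm _ _ ?_
          simpa [negO, epsc] using budget_anom hbud hc
        · exact Phi_init_id j hjm _ _
      obtain ⟨x', hx⟩ := (Phi k m A B F j).back hinit (by simpa using hk1)
        (by simp [switchCost]) w
      rw [show switchCost (some false) false = 0 from rfl, Nat.sub_zero] at hx
      refine ⟨Sum.inr ⟨i, x'⟩, hbud', List.mem_cons_of_mem _ hroot, (i, j) :: M, ?_,
        by simp only [List.length_cons]; omega, ?_, ?_⟩
      · intro a ha b hb
        rcases List.mem_cons.1 ha with rfl | ha <;> rcases List.mem_cons.1 hb with rfl | hb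
        · exact ⟨fun _ => rfl, fun _ => rfl⟩
        · constructor
          · intro h1
            exact absurd h1.symm (hiM b hb)
          · intro h2
            have h2' : j = b.2 := h2
            have hb' : (b.1, j) = b := by rw [h2']
            exact absurd ⟨b.1, by rw [hb']; exact hb⟩ hM
        · constructor
          · intro h1
            exact absurd h1 (hiM a ha)
          · intro h2
            have h2' : a.2 = j := h2
            have ha' : (a.1, j) = a := by rw [← h2']
            exact absurd ⟨a.1, by rw [ha']; exact ha⟩ hM
        · exact hinj a ha b hb
      · intro p hp
        rcases List.mem_cons.1 hp with rfl | hp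
        · exact Or.inr ⟨(i, j), List.mem_cons_self, inBr_pair i j x' w⟩
        · rcases hshape p hp with h | ⟨a, ha, hab⟩
          · exact Or.inl h
          · exact Or.inr ⟨a, List.mem_cons_of_mem _ ha, hab⟩
      · intro a ha
        rcases List.mem_cons.1 ha with rfl | ha
        · refine ⟨[(x', w)], hx, by simp only [List.length_cons, List.length_nil]; omega, ?_⟩
          rw [List.filter_cons_of_pos (inBr_pair i j x' w)]
          have hnil : List.filter (inBr m A B i j) ps = [] := by
            rw [List.filter_eq_nil_iff]
            intro p hp hbp
            rcases hshape p hp with rfl | ⟨b, hb, hbB⟩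
            · exact absurd hbp (by rw [inBr_root m A B i j]; simp)
            · exact hM ⟨b.1, by
                have h2 := (inBr_unique m A B (by exact_mod_cast hbp) hbB).2
                rw [h2]; exact hb⟩
          rw [hnil]; rfl
        · have ha2 : a.2 ≠ j := fun h2 => hM ⟨a.1, by
            have e : (a.1, j) = a := by rw [← h2]
            rw [e]; exact ha⟩
          obtain ⟨qs', hJ', h1', h2'⟩ := hbr a ha
          refine ⟨qs', (Phi k m A B F a.2).mono hstep hJ',
            by simp only [List.length_cons]; omega, ?_⟩
          rw [List.filter_cons_of_neg (by rw [inBr_pair_ne (Or.inr ha2)]; simp)]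
          exact h2'

end Step4

end EHRX

namespace EHRX

/-- The inductive step: an invariant family for the level `s+1` trees. -/
noncomputable def stepFam (k m : ℕ) (A B : RTree) (F : Fam k A B) (s : ℕ)
    (hrA : ∀ v, A.parent v = none ↔ v = A.root)
    (hrB : ∀ v, B.parent v = none ↔ v = B.root)
    (hkm : k ≤ m)
    (hFinit : ∀ sw l, sw + epsc l ≤ s → F.J sw l [(A.root, B.root)]) :
    Fam k (Sbig m B) (Tbig m A B) where
  J := Inv k m A B F s
  good h := Inv_good hrA hrB h
  mono hle h := Inv_mono hle h
  forth h := Inv_forth hkm h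
  back h := Inv_back hkm hFinit h

lemma stepFam_init (k m : ℕ) (A B : RTree) (F : Fam k A B) (s : ℕ)
    (hrA : ∀ v, A.parent v = none ↔ v = A.root)
    (hrB : ∀ v, B.parent v = none ↔ v = B.root)
    (hkm : k ≤ m)
    (hFinit : ∀ sw l, sw + epsc l ≤ s → F.J sw l [(A.root, B.root)]) :
    ∀ sw l, sw + epsc l ≤ s + 1 →
      (stepFam k m A B F s hrA hrB hkm hFinit).J sw l
        [((Sbig m B).root, (Tbig m A B).root)] := by
  intro sw l h
  refine ⟨h, List.mem_singleton.2 rfl, [], ?_, by simp, ?_, ?_⟩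
  · intro a ha; exact absurd ha List.not_mem_nil
  · intro p hp; left; simpa using hp
  · intro a ha; exact absurd ha List.not_mem_nil

lemma treePair_root_iff (m : ℕ) : ∀ s : ℕ,
    (∀ v, (TreePair m s).1.parent v = none ↔ v = (TreePair m s).1.root) ∧
    (∀ v, (TreePair m s).2.parent v = none ↔ v = (TreePair m s).2.root) := by
  intro s
  cases s with
  | zero =>
    constructor
    · intro v; cases v; exact ⟨fun _ => rfl, fun _ => rfl⟩
    · exact hang_parent_none_iff m _
  | succ s' =>
    exact ⟨hang_parent_none_iff (m + 1) _, hang_parent_none_iff (m + 1) _⟩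

lemma claim (k m : ℕ) (hkm : k ≤ m) :
    ∀ s : ℕ, ∃ F : Fam k (TreePair m s).1 (TreePair m s).2,
      ∀ sw l, sw + epsc l ≤ s →
        F.J sw l [((TreePair m s).1.root, (TreePair m s).2.root)] := by
  intro s
  induction s with
  | zero =>
    refine ⟨baseFam k m, ?_⟩
    intro sw l h
    rcases l with _ | b
    · exact absurd h (by simp [epsc])
    · cases b
      · exact absurd h (by simp [epsc])
      · exact ⟨by simpa [epsc] using h, rfl, by intro p hp; exact List.mem_singleton.1 hp⟩
  | succ s' ih =>
    obtain ⟨F, hF⟩ := ih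
    have hr := treePair_root_iff m s'
    exact ⟨stepFam k m (TreePair m s').1 (TreePair m s').2 F s' hr.1 hr.2 hkm hF,
      stepFam_init k m (TreePair m s').1 (TreePair m s').2 F s' hr.1 hr.2 hkm hF⟩

end EHRX


/-- For every `s ≥ 2`, positive `k` and `m ≥ s·k`, Duplicator
wins `EHR[T₁^{(s,k,m)}, T₂^{(s,k,m)}, s-1, k]`. -/
theorem dup_wins_EHR_trees (s k m : ℕ) (hs : 2 ≤ s) (hk : 0 < k) (hm : s * k ≤ m) :
    DupWinsEHR (Tree1 s k m) (Tree2 s k m) (s - 1) k := by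
  have hkm : k ≤ m := by
    calc k = 1 * k := (one_mul k).symm
    _ ≤ s * k := Nat.mul_le_mul_right k (by omega)
    _ ≤ m := hm
  obtain ⟨F, hF⟩ := EHRX.claim k m hkm s
  have hinit := hF (s - 1) none (by
    have he : EHRX.epsc none = 1 := rfl
    omega)
  exact F.wins k hinit (by show 1 + k ≤ k + 1; omega)
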